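/- arXiv:1406.5666 — 6 statements merged into one kernel-verified Lean document; each statement's English description precedes it below -/
import Mathlib

section
/- Let d ≥ 1 and let A and B be d×d real matrices. Then there exists r ∈ [0,1] such that det A − det B = cof(rA + (1−r)B) : (A − B), where cof denotes the cofactor matrix and : the Frobenius inner product. -/
open Matrix

/-- The cofactor matrix of a square matrix: the transpose of the adjugate. -/
noncomputable def cof {d : ℕ} (A : Matrix (Fin d) (Fin d) ℝ) : Matrix (Fin d) (Fin d) ℝ :=
  (Matrix.adjugate A)ᵀ

/-- The Frobenius inner product of two matrices. -/
def frobInner {d : ℕ} (A B : Matrix (Fin d) (Fin d) ℝ) : ℝ :=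
  ∑ i, ∑ j, A i j * B i j

/-- The determinant as a continuous multilinear map in the rows. -/
noncomputable def detCML (d : ℕ) :
    ContinuousMultilinearMap ℝ (fun _ : Fin d => (Fin d → ℝ)) ℝ :=
  { (Matrix.detRowAlternating : (Fin d → ℝ) [⋀^Fin d]→ₗ[ℝ] ℝ).toMultilinearMap with
    cont := by
      have h : Continuous fun M : Matrix (Fin d) (Fin d) ℝ => M.det :=
        Continuous.matrix_det continuous_id
      exact h }

lemma detCML_apply {d : ℕ} (M : Matrix (Fin d) (Fin d) ℝ) : detCML d M = M.det := rfl

lemma linearDeriv_det {d : ℕ} (M C : Matrix (Fin d) (Fin d) ℝ) :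
    (detCML d).linearDeriv M C = frobInner (cof M) C := by
  refine (ContinuousMultilinearMap.linearDeriv_apply _ _ _).trans ?_
  have h1 : ∀ i : Fin d, (detCML d) (Function.update M i (C i))
      = ∑ j, adjugate M j i * C i j := by
    intro i
    have hci : C i = ∑ j, C i j • (Pi.single j (1 : ℝ) : Fin d → ℝ) := by
      ext j
      simp [Pi.single_apply, Finset.sum_apply, mul_comm]
    calc (detCML d) (Function.update M i (C i))
        = (detCML d) (Function.update M i (∑ j, C i j • (Pi.single j (1 : ℝ) : Fin d → ℝ))) := by
          rw [← hci]
      _ = ∑ j, C i j • (detCML d) (Function.update M i (Pi.single j (1 : ℝ) : Fin d → ℝ)) := by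
          refine ((detCML d).toMultilinearMap.map_update_sum Finset.univ i _ M).trans ?_
          exact Finset.sum_congr rfl fun j _ =>
            (detCML d).toMultilinearMap.map_update_smul M i _ _
      _ = ∑ j, adjugate M j i * C i j := by
          refine Finset.sum_congr rfl fun j _ => ?_
          rw [Matrix.adjugate_apply, smul_eq_mul, mul_comm]
          rfl
  simp_rw [h1]
  simp [frobInner, cof, Matrix.transpose_apply, mul_comm]

theorem stmt0 (d : ℕ) (hd : 1 ≤ d) (A B : Matrix (Fin d) (Fin d) ℝ) :
    ∃ r ∈ Set.Icc (0 : ℝ) 1,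
      A.det - B.det = frobInner (cof (r • A + (1 - r) • B)) (A - B) := by
  classical
  set C : Matrix (Fin d) (Fin d) ℝ := A - B with hC
  have hfun : ∀ t : ℝ, (B + t • C : Matrix (Fin d) (Fin d) ℝ)
      = fun i => B i + t • C i := by
    intro t; ext i j; simp
  set f : ℝ → ℝ := fun t => (detCML d) (fun i => B i + t • C i) with hf
  have hft : ∀ t : ℝ, f t = (B + t • C).det := by
    intro t; rw [hf]; simp only; rw [hfun t]; rfl
  have hγ : ∀ r : ℝ, HasDerivAt (fun t : ℝ => (fun i => B i + t • C i : Fin d → Fin d → ℝ))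
      (fun i => C i) r := by
    intro r
    rw [hasDerivAt_pi]
    intro i
    have := ((hasDerivAt_id r).smul_const (C i)).const_add (B i)
    simpa using this
  have hderiv : ∀ r : ℝ, HasDerivAt f (frobInner (cof (B + r • C)) C) r := by
    intro r
    have h2 := ((detCML d).hasFDerivAt
      (x := (fun i => B i + r • C i : Fin d → Fin d → ℝ))).comp_hasDerivAt r (hγ r)
    have h3 : (detCML d).linearDeriv (fun i => B i + r • C i) (fun i => C i)
        = frobInner (cof (B + r • C)) C := by
      rw [hfun r]; exact linearDeriv_det _ _
    rw [h3] at h2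
    exact h2
  obtain ⟨c, hc, hceq⟩ := exists_hasDerivAt_eq_slope f _ (by norm_num : (0:ℝ) < 1)
    (fun x _ => (hderiv x).continuousAt.continuousWithinAt)
    (fun x _ => hderiv x)
  refine ⟨c, ⟨le_of_lt hc.1, le_of_lt hc.2⟩, ?_⟩
  have hMC : (B + c • C : Matrix (Fin d) (Fin d) ℝ) = c • A + (1 - c) • B := by
    ext i j
    simp [hC, Matrix.sub_apply, Matrix.add_apply, Matrix.smul_apply]
    ring
  have hf1 : f 1 = A.det := by rw [hft]; congr 1; ext i j; simp [hC]
  have hf0 : f 0 = B.det := by rw [hft]; simp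
  rw [← hMC, hceq, hf1, hf0]
  ring
end

section
/- Let Ω be a bounded open convex subset of ℝ^d, let M ≥ 0, and let (u_j)_{j∈ℕ} be a sequence of convex functions u_j : Ω → ℝ with |u_j(x)| ≤ M for all j and all x ∈ Ω. Then there exist a convex function u : Ω → ℝ and a strictly increasing sequence of indices (j_l) such that u_{j_l} converges to u pointwise on Ω, and the convergence is uniform on every compact subset of Ω. -/
open Filter Metric Set

theorem stmt10 (d : ℕ) (Ω : Set (EuclideanSpace ℝ (Fin d)))
    (hΩo : IsOpen Ω) (hΩb : Bornology.IsBounded Ω) (hΩc : Convex ℝ Ω)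
    (M : ℝ) (hM : 0 ≤ M) (u : ℕ → EuclideanSpace ℝ (Fin d) → ℝ)
    (hu : ∀ j, ConvexOn ℝ Ω (u j)) (hbound : ∀ j, ∀ x ∈ Ω, |u j x| ≤ M) :
    ∃ (v : EuclideanSpace ℝ (Fin d) → ℝ) (φ : ℕ → ℕ), StrictMono φ ∧
      ConvexOn ℝ Ω v ∧
      (∀ x ∈ Ω, Tendsto (fun l => u (φ l) x) atTop (nhds (v x))) ∧
      ∀ K ⊆ Ω, IsCompact K →
        TendstoUniformlyOn (fun l => u (φ l)) v atTop K := by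
  classical
  rcases Set.eq_empty_or_nonempty Ω with hemp | hne
  · refine ⟨fun _ => 0, id, strictMono_id, ⟨hΩc, ?_⟩, ?_, ?_⟩
    · intro x hx; rw [hemp] at hx; exact absurd hx (Set.notMem_empty x)
    · intro x hx; rw [hemp] at hx; exact absurd hx (Set.notMem_empty x)
    · intro K hK _
      have hKe : K = ∅ := Set.eq_empty_of_subset_empty (hemp ▸ hK)
      intro U hU
      exact Filter.Eventually.of_forall fun n x hx => absurd (hKe ▸ hx) (Set.notMem_empty x)
  -- countable dense subset of Ω
  haveI : Nonempty ↥Ω := hne.to_subtype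
  obtain ⟨s, hs_c, hs_d⟩ := TopologicalSpace.exists_countable_dense ↥Ω
  set T : Set (EuclideanSpace ℝ (Fin d)) := (↑) '' s with hT
  have hTΩ : T ⊆ Ω := by rintro x ⟨y, _, rfl⟩; exact y.2
  have hT_c : T.Countable := hs_c.image _
  have hT_ne : T.Nonempty := (hs_d.nonempty).image _
  have hT_dense : ∀ x ∈ Ω, ∀ ε > 0, ∃ t ∈ T, dist t x < ε := by
    intro x hx ε hε
    obtain ⟨y, hy1, hy2⟩ := Metric.dense_iff.mp hs_d ⟨x, hx⟩ ε hε
    exact ⟨(y : EuclideanSpace ℝ (Fin d)), ⟨y, hy2, rfl⟩, by simpa [Subtype.dist_eq] using hy1⟩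
  obtain ⟨e, he⟩ := hT_c.exists_eq_range hT_ne
  have heΩ : ∀ n, e n ∈ Ω := fun n => hTΩ (he ▸ Set.mem_range_self n)
  -- extract a subsequence converging at all points of T
  set F : ℕ → (ℕ → Set.Icc (-M) M) := fun j n =>
    ⟨u j (e n), Set.mem_Icc.mpr (abs_le.mp (hbound j (e n) (heΩ n)))⟩ with hF
  obtain ⟨g, φ, hφ, hconv⟩ := SeqCompactSpace.tendsto_subseq F
  have hTconv : ∀ n, Tendsto (fun l => u (φ l) (e n)) atTop (nhds ((g n : ℝ))) := by
    intro n
    have h1 := tendsto_pi_nhds.mp hconv n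
    have := (continuous_subtype_val.tendsto (g n)).comp h1
    exact this
  -- key: uniform Cauchy on compacts
  have key : ∀ K ⊆ Ω, IsCompact K → UniformCauchySeqOn (fun l => u (φ l)) atTop K := by
    intro K hKΩ hK
    obtain ⟨δ, hδ, hδΩ⟩ := hK.exists_thickening_subset_open hΩo hKΩ
    set C : ℝ := 2 * M / (δ / 2) with hCdef
    have hC0 : 0 ≤ C := by positivity
    have hlip : ∀ j, ∀ x₀ ∈ K, LipschitzOnWith C.toNNReal (u j) (ball x₀ (δ / 2)) := by
      intro j x₀ hx₀
      have hball : ball x₀ δ ⊆ Ω := fun y hy =>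
        hδΩ (Metric.mem_thickening_iff.mpr ⟨x₀, hx₀, hy⟩)
      have h1 := ((hu j).subset hball (convex_ball _ _)).lipschitzOnWith_of_abs_le
        (show (0:ℝ) < δ/2 by positivity)
        (fun a ha => hbound j a (hball (mem_ball.mpr ha)))
      have h2 : δ - δ/2 = δ/2 := by ring
      rwa [h2] at h1
    rw [Metric.uniformCauchySeqOn_iff]
    intro ε hε
    set η : ℝ := min (δ/4) (ε/(5*(C+1))) with hηdef
    have hη0 : 0 < η := lt_min (by positivity) (by positivity)
    have hηδ : η ≤ δ/4 := min_le_left _ _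
    have hηε : η ≤ ε/(5*(C+1)) := min_le_right _ _
    have hcover : K ⊆ ⋃ x ∈ K, ball x η := fun x hx =>
      Set.mem_biUnion hx (mem_ball_self hη0)
    obtain ⟨b, hbK, hbfin, hbcov⟩ :=
      hK.elim_finite_subcover_image (fun x _ => isOpen_ball) hcover
    have ht : ∀ x ∈ b, ∃ t ∈ T, dist t x < η := fun x hx =>
      hT_dense x (hKΩ (hbK hx)) η hη0
    choose! t htT htd using ht
    have hN : ∀ x ∈ b, ∃ N, ∀ m ≥ N, ∀ n ≥ N,
        dist (u (φ m) (t x)) (u (φ n) (t x)) < ε/5 := by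
      intro x hx
      obtain ⟨n0, hn0⟩ := Set.mem_range.mp (he ▸ htT x hx)
      have hc : CauchySeq (fun l => u (φ l) (t x)) := by
        rw [← hn0]; exact (hTconv n0).cauchySeq
      rw [Metric.cauchySeq_iff] at hc
      obtain ⟨N, hN⟩ := hc (ε/5) (by positivity)
      exact ⟨N, hN⟩
    choose! N hNs using hN
    refine ⟨hbfin.toFinset.sup N, ?_⟩
    intro m hm n hn x hx
    obtain ⟨x₀, hx₀b, hxball⟩ := Set.mem_iUnion₂.mp (hbcov hx)
    have hmN : N x₀ ≤ hbfin.toFinset.sup N := Finset.le_sup (hbfin.mem_toFinset.mpr hx₀b)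
    have hxb : x ∈ ball x₀ (δ/2) := by
      have : dist x x₀ < η := mem_ball.mp hxball
      have : dist x x₀ < δ/2 := lt_of_lt_of_le this (by linarith)
      exact mem_ball.mpr this
    have htb : t x₀ ∈ ball x₀ (δ/2) := by
      have := htd x₀ hx₀b
      exact mem_ball.mpr (lt_of_lt_of_le this (by linarith))
    have hdxt : dist x (t x₀) ≤ 2 * η := by
      have h1 : dist x x₀ < η := mem_ball.mp hxball
      have h2 : dist (t x₀) x₀ < η := htd x₀ hx₀b
      calc dist x (t x₀) ≤ dist x x₀ + dist x₀ (t x₀) := dist_triangle _ _ _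
        _ ≤ 2 * η := by rw [dist_comm x₀ (t x₀)]; linarith
    have hC2 : C * (2 * η) ≤ 2*ε/5 := by
      have h1 : C * (2 * η) ≤ C * (2 * (ε/(5*(C+1)))) := by
        apply mul_le_mul_of_nonneg_left _ hC0
        linarith
      have h2 : C * (2 * (ε/(5*(C+1)))) ≤ 2*ε/5 := by
        have hC1 : (0:ℝ) < C + 1 := by linarith
        have he1 : C * (2 * (ε/(5*(C+1)))) = 2*ε*C / (5*(C+1)) := by
          field_simp
        rw [he1, div_le_div_iff₀ (by positivity) (by norm_num : (0:ℝ) < 5)]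
        nlinarith [hε.le, hC0]
      linarith
    have lipest : ∀ j, dist (u j x) (u j (t x₀)) ≤ 2*ε/5 := by
      intro j
      have h1 := (hlip j x₀ (hbK hx₀b)).dist_le_mul x hxb (t x₀) htb
      rw [Real.coe_toNNReal C hC0] at h1
      calc dist (u j x) (u j (t x₀)) ≤ C * dist x (t x₀) := h1
        _ ≤ C * (2 * η) := mul_le_mul_of_nonneg_left hdxt hC0
        _ ≤ 2*ε/5 := hC2
    have hmid := hNs x₀ hx₀b m (le_trans hmN hm) n (le_trans hmN hn)
    calc dist (u (φ m) x) (u (φ n) x)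
        ≤ dist (u (φ m) x) (u (φ m) (t x₀)) + dist (u (φ m) (t x₀)) (u (φ n) (t x₀))
          + dist (u (φ n) (t x₀)) (u (φ n) x) := dist_triangle4 _ _ _ _
      _ < 2*ε/5 + ε/5 + 2*ε/5 := by
          have := lipest (φ m)
          have h2 := lipest (φ n)
          rw [dist_comm (u (φ n) (t x₀)) (u (φ n) x)]
          linarith
      _ = ε := by ring
  -- pointwise convergence
  have hptconv : ∀ x ∈ Ω, ∃ L, Tendsto (fun l => u (φ l) x) atTop (nhds L) := by
    intro x hx
    have hk := key {x} (Set.singleton_subset_iff.mpr hx) isCompact_singleton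
    rw [Metric.uniformCauchySeqOn_iff] at hk
    have hcs : CauchySeq (fun l => u (φ l) x) := by
      rw [Metric.cauchySeq_iff]
      intro ε hε
      obtain ⟨NN, hNN⟩ := hk ε hε
      exact ⟨NN, fun m hm n hn => hNN m hm n hn x rfl⟩
    exact cauchySeq_tendsto_of_complete hcs
  set v : EuclideanSpace ℝ (Fin d) → ℝ := fun x => limUnder atTop (fun l => u (φ l) x)
    with hvdef
  have hvt : ∀ x ∈ Ω, Tendsto (fun l => u (φ l) x) atTop (nhds (v x)) :=
    fun x hx => tendsto_nhds_limUnder (hptconv x hx)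
  refine ⟨v, φ, hφ, ⟨hΩc, ?_⟩, hvt, fun K hKΩ hK =>
    (key K hKΩ hK).tendstoUniformlyOn_of_tendsto fun x hx => hvt x (hKΩ hx)⟩
  intro x hx y hy a b ha hb hab
  have h1 := hvt _ (hΩc hx hy ha hb hab)
  have h2 := ((hvt x hx).const_mul a).add ((hvt y hy).const_mul b)
  have h3 : a • v x + b • v y = a * v x + b * v y := by simp [smul_eq_mul]
  rw [h3]
  refine le_of_tendsto_of_tendsto' h1 h2 fun l => ?_
  have := (hu (φ l)).2 hx hy ha hb hab
  simpa [smul_eq_mul] using this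
end

section
/- Let Ω be an open convex subset of ℝ^d, let v : Ω → ℝ be convex and differentiable at every point of Ω, and let (v_m)_{m∈ℕ} be a sequence of functions v_m : Ω → ℝ, each convex and differentiable at every point of Ω, such that v_m converges pointwise to v on Ω. Then the gradient maps ∇v_m converge to ∇v uniformly on every compact subset of Ω. -/
open Filter Set Metric

section Helpers


lemma inner_grad_le' {d : ℕ} {Ω : Set (EuclideanSpace ℝ (Fin d))} (hΩc : Convex ℝ Ω) {u : (EuclideanSpace ℝ (Fin d)) → ℝ}
    (hu : ConvexOn ℝ Ω u) {x y : EuclideanSpace ℝ (Fin d)} (hx : x ∈ Ω) (hy : y ∈ Ω)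
    (hd : DifferentiableAt ℝ u x) :
    inner ℝ (gradient u x) (y - x) ≤ u y - u x := by
  set φ : ℝ → ℝ := fun t => u (x + t • (y - x)) with hφ
  have hmem : ∀ t ∈ Icc (0:ℝ) 1, x + t • (y - x) ∈ Ω := by
    intro t ht
    have := hΩc.segment_subset hx hy (by
      rw [segment_eq_image']
      exact ⟨t, ht, rfl⟩)
    exact this
  have hφc : ConvexOn ℝ (Icc (0:ℝ) 1) φ := by
    constructor
    · exact convex_Icc 0 1
    · intro a ha b hb p q hp hq hpq
      have key := hu.2 (hmem a ha) (hmem b hb) hp hq hpq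
      have : p • (x + a • (y - x)) + q • (x + b • (y - x))
          = x + (p * a + q * b) • (y - x) := by
        rw [smul_add, smul_add, smul_smul, smul_smul]
        match_scalars <;> linarith
      rw [this] at key
      exact key
  have hder : HasDerivAt φ (inner ℝ (gradient u x) (y - x)) 0 := by
    have h1 : HasDerivAt (fun t : ℝ => x + t • (y - x)) (y - x) 0 := by
      simpa using ((hasDerivAt_id (0:ℝ)).smul_const (y - x)).const_add x
    have hd' : HasFDerivAt u (fderiv ℝ u x) (x + (0:ℝ) • (y - x)) := by
      simpa using hd.hasFDerivAt
    have h2 := (hd'.comp_hasDerivAt 0 h1)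
    have : (fderiv ℝ u x) (y - x) = inner ℝ (gradient u x) (y - x) := by
      simp [gradient, InnerProductSpace.toDual_apply_apply]
    rw [← this]; exact h2
  have := hφc.le_slope_of_hasDerivAt (by simp : (0:ℝ) ∈ Icc (0:ℝ) 1)
    (by simp : (1:ℝ) ∈ Icc (0:ℝ) 1) zero_lt_one hder
  rw [slope_def_field] at this
  simpa [hφ] using this


lemma sign_mul_abs' (a : ℝ) : Real.sign a * |a| = a := by
  rcases lt_trichotomy a 0 with h | h | h
  · rw [Real.sign_of_neg h, abs_of_neg h]; ring
  · simp [h]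
  · rw [Real.sign_of_pos h, abs_of_pos h]; ring

lemma local_upper' {d : ℕ} {Ω : Set (EuclideanSpace ℝ (Fin d))}
    {u : EuclideanSpace ℝ (Fin d) → ℝ} (hu : ConvexOn ℝ Ω u)
    {c : EuclideanSpace ℝ (Fin d)} {δ' B : ℝ} (hδ' : 0 < δ')
    (hball : closedBall c δ' ⊆ Ω)
    (hB : ∀ i : Fin d, ∀ s : ℝ, s = 1 ∨ s = -1 →
      u (c + (δ' * s) • EuclideanSpace.single i 1) ≤ B)
    (hBc : u c ≤ B) :
    ∀ y ∈ closedBall c (δ' / (d + 1)), u y ≤ B := by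
  intro y hy
  have hyc : ‖y - c‖ ≤ δ' / (d+1) := by
    rwa [mem_closedBall, dist_eq_norm] at hy
  set t : Fin d → ℝ := fun i => |y i - c i| / δ' with ht
  have htn : ∀ i, 0 ≤ t i := fun i => div_nonneg (abs_nonneg _) hδ'.le
  have hcoord : ∀ i, |y i - c i| ≤ ‖y - c‖ := by
    intro i
    rw [show y i - c i = (y - c) i from rfl, ← Real.sqrt_sq_eq_abs,
      EuclideanSpace.norm_eq]
    apply Real.sqrt_le_sqrt
    simpa [Real.norm_eq_abs, sq_abs] using
      Finset.single_le_sum (f := fun j => ‖(y - c) j‖ ^ 2)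
        (fun j _ => sq_nonneg _) (Finset.mem_univ i)
  have hti : ∀ i, t i ≤ (δ' / (d+1)) / δ' := by
    intro i
    show |y i - c i| / δ' ≤ (δ' / (d+1)) / δ'
    gcongr
    exact (hcoord i).trans hyc
  have hT : ∑ i, t i ≤ d / (d + 1) := by
    calc ∑ i, t i ≤ ∑ _i : Fin d, (δ' / (d+1)) / δ' := Finset.sum_le_sum fun i _ => hti i
      _ = d * ((δ' / (d+1)) / δ') := by simp [mul_comm]
      _ = d / (d+1) := by field_simp
  have hT1 : ∑ i, t i ≤ 1 := hT.trans (by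
    rw [div_le_one (by positivity)]; linarith)
  set p : Option (Fin d) → EuclideanSpace ℝ (Fin d) := fun o =>
    Option.elim o c (fun i => c + (δ' * Real.sign (y i - c i)) • EuclideanSpace.single i 1) with hp
  set w : Option (Fin d) → ℝ := fun o => Option.elim o (1 - ∑ i, t i) t with hw
  have hw0 : ∀ o ∈ Finset.univ, 0 ≤ w o := by
    rintro (_ | i) _
    · simp only [hw, Option.elim]; linarith
    · exact htn i
  have hw1 : ∑ o, w o = 1 := by
    rw [Fintype.sum_option]
    simp [hw]
  have hpball : ∀ i : Fin d, p (some i) ∈ closedBall c δ' := by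
    intro i
    rw [mem_closedBall, dist_eq_norm]
    simp only [hp, Option.elim, add_sub_cancel_left]
    rw [norm_smul, EuclideanSpace.norm_single, norm_one, mul_one,
      Real.norm_eq_abs, abs_mul]
    have h1 : |Real.sign (y i - c i)| ≤ 1 := by
      rcases Real.sign_apply_eq (y i - c i) with h | h | h <;> rw [h] <;> norm_num
    calc |δ'| * |Real.sign (y i - c i)| ≤ δ' * 1 :=
          mul_le_mul (le_of_eq (abs_of_pos hδ')) h1 (abs_nonneg _) hδ'.le
      _ = δ' := mul_one _
  have hpmem : ∀ o ∈ Finset.univ, p o ∈ Ω := by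
    rintro (_ | i) _
    · exact hball (mem_closedBall_self hδ'.le)
    · exact hball (hpball i)
  have hrep : ∑ o, w o • p o = y := by
    rw [Fintype.sum_option]
    simp only [hw, hp, Option.elim]
    have key : ∀ i : Fin d, t i • (c + (δ' * Real.sign (y i - c i)) • EuclideanSpace.single i 1)
        = t i • c + (y i - c i) • EuclideanSpace.single i 1 := by
      intro i
      rw [smul_add, smul_smul]
      congr 2
      calc t i * (δ' * Real.sign (y i - c i))
          = Real.sign (y i - c i) * |y i - c i| * (δ' / δ') := by rw [ht]; ring
        _ = Real.sign (y i - c i) * |y i - c i| := by rw [div_self hδ'.ne', mul_one]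
        _ = y i - c i := sign_mul_abs' _
    rw [Finset.sum_congr rfl (fun i _ => key i)]
    rw [Finset.sum_add_distrib, ← Finset.sum_smul]
    ext j
    simp only [PiLp.add_apply, PiLp.smul_apply, smul_eq_mul]
    have hsum : (∑ i, (y i - c i) • EuclideanSpace.single (𝕜 := ℝ) i (1:ℝ)) j
        = y j - c j := by
      rw [WithLp.ofLp_sum, Finset.sum_apply]
      simp [EuclideanSpace.single_apply]
    rw [hsum]
    ring
  have hjen := hu.map_sum_le hw0 hw1 hpmem
  rw [hrep] at hjen
  apply hjen.trans
  have hup : ∀ o : Option (Fin d), u (p o) ≤ B := by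
    rintro (_ | i)
    · exact hBc
    · simp only [hp, Option.elim]
      rcases Real.sign_apply_eq (y i - c i) with h | h | h
      · rw [h]; exact hB i _ (Or.inr rfl)
      · rw [h]; simpa using hBc
      · rw [h]; exact hB i _ (Or.inl rfl)
  calc ∑ o, w o * u (p o) ≤ ∑ o, w o * B :=
        Finset.sum_le_sum fun o ho => mul_le_mul_of_nonneg_left (hup o) (hw0 o ho)
    _ = B := by rw [← Finset.sum_mul, hw1, one_mul]


lemma norm_grad_le' {d : ℕ} {Ω : Set (EuclideanSpace ℝ (Fin d))} (hΩc : Convex ℝ Ω)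
    {u : EuclideanSpace ℝ (Fin d) → ℝ} (hu : ConvexOn ℝ Ω u)
    {x : EuclideanSpace ℝ (Fin d)} {ρ B : ℝ} (hρ : 0 < ρ)
    (hball : closedBall x ρ ⊆ Ω) (hd : DifferentiableAt ℝ u x)
    (hB : ∀ y ∈ closedBall x ρ, u y ≤ B) :
    ‖gradient u x‖ ≤ (B - u x) / ρ := by
  set g := gradient u x with hg
  rcases eq_or_ne g 0 with h0 | h0
  · rw [h0, norm_zero]
    apply div_nonneg _ hρ.le
    linarith [hB x (mem_closedBall_self hρ.le)]
  · set y := x + (ρ / ‖g‖) • g with hy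
    have hyball : y ∈ closedBall x ρ := by
      rw [mem_closedBall, dist_eq_norm, hy, add_sub_cancel_left, norm_smul,
        Real.norm_eq_abs, abs_of_pos (div_pos hρ (norm_pos_iff.mpr h0)), div_mul_cancel₀]
      exact norm_ne_zero_iff.mpr h0
    have hkey := inner_grad_le' hΩc hu (hball (mem_closedBall_self hρ.le)) (hball hyball) hd
    rw [hy, add_sub_cancel_left, real_inner_smul_right, real_inner_self_eq_norm_mul_norm] at hkey
    have hgn : ‖g‖ ≠ 0 := norm_ne_zero_iff.mpr h0
    have : ρ / ‖g‖ * (‖g‖ * ‖g‖) = ρ * ‖g‖ := by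
      field_simp
    rw [this] at hkey
    rw [le_div_iff₀ hρ]
    calc ‖g‖ * ρ = ρ * ‖g‖ := mul_comm _ _
      _ ≤ u y - u x := hkey
      _ ≤ B - u x := by linarith [hB y hyball]

lemma sub_le_grad_norm' {d : ℕ} {Ω : Set (EuclideanSpace ℝ (Fin d))} (hΩc : Convex ℝ Ω)
    {u : EuclideanSpace ℝ (Fin d) → ℝ} (hu : ConvexOn ℝ Ω u)
    {a b : EuclideanSpace ℝ (Fin d)} (ha : a ∈ Ω) (hb : b ∈ Ω)
    (hd : DifferentiableAt ℝ u a) :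
    u a - u b ≤ ‖gradient u a‖ * ‖a - b‖ := by
  have h := inner_grad_le' hΩc hu ha hb hd
  have h2 : inner ℝ (gradient u a) (a - b) ≤ ‖gradient u a‖ * ‖a - b‖ :=
    real_inner_le_norm _ _
  have h3 : (inner ℝ (gradient u a) (a - b) : ℝ) = - inner ℝ (gradient u a) (b - a) := by
    rw [← inner_neg_right]
    congr 1
    abel
  linarith [h3 ▸ h2]


lemma mul_div_le_quarter' {L e : ℝ} (hL0 : 0 ≤ L) (he : 0 < e) :
    L * (e / (4 * (L + 1))) ≤ e / 4 := by
  have hL1 : (0:ℝ) < L + 1 := by linarith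
  have key : L * (e / (4 * (L + 1))) = (L / (L + 1)) * (e / 4) := by
    rw [← mul_div_assoc, div_mul_div_comm, mul_comm (L+1) 4]
  rw [key]
  exact mul_le_of_le_one_left (by positivity) (by rw [div_le_one hL1]; linarith)

lemma unif_conv' {d : ℕ} {Ω : Set (EuclideanSpace ℝ (Fin d))} (hΩc : Convex ℝ Ω)
    {v : EuclideanSpace ℝ (Fin d) → ℝ}
    (hv : ConvexOn ℝ Ω v) (hvd : ∀ x ∈ Ω, DifferentiableAt ℝ v x)
    {vm : ℕ → EuclideanSpace ℝ (Fin d) → ℝ}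
    (hvm : ∀ m, ConvexOn ℝ Ω (vm m))
    (hvmd : ∀ m, ∀ x ∈ Ω, DifferentiableAt ℝ (vm m) x)
    (hlim : ∀ x ∈ Ω, Tendsto (fun m => vm m x) atTop (nhds (v x)))
    {C : Set (EuclideanSpace ℝ (Fin d))} (hCc : IsCompact C) (hCΩ : C ⊆ Ω)
    {δ2 : ℝ} (hδ2 : 0 < δ2) (hCball : ∀ y ∈ C, closedBall y δ2 ⊆ Ω) :
    ∀ ε > 0, ∃ N, ∀ m ≥ N, ∀ x ∈ C, |vm m x - v x| ≤ ε := by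
  intro ε hε
  set η : ℝ := δ2 / (d + 1) with hη
  have hηpos : 0 < η := by positivity
  have hηδ : η ≤ δ2 := by
    rw [hη, div_le_iff₀ (by positivity)]
    nlinarith
  have key : ∀ c ∈ C, ∃ ρ > 0, ∀ x ∈ closedBall c ρ,
      (∀ m, |vm m x - vm m c| ≤ ε/4) ∧ |v x - v c| ≤ ε/4 := by
    intro c hc
    have hcΩ : c ∈ Ω := hCΩ hc
    have hball : closedBall c δ2 ⊆ Ω := hCball c hc
    have hballη : closedBall c η ⊆ Ω := (closedBall_subset_closedBall hηδ).trans hball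
    set G : EuclideanSpace ℝ (Fin d) → ℝ := fun q => ⨆ m, vm m q with hGdef
    have hG : ∀ q ∈ Ω, (∀ m, vm m q ≤ G q) ∧ v q ≤ G q := by
      intro q hq
      have hbdd : BddAbove (Set.range fun m => vm m q) := (hlim q hq).bddAbove_range
      refine ⟨fun m => le_ciSup hbdd m, ?_⟩
      exact le_of_tendsto (hlim q hq) (Eventually.of_forall fun m => le_ciSup hbdd m)
    have hprobe : ∀ (i : Fin d) (s : ℝ), s = 1 ∨ s = -1 →
        c + (δ2 * s) • EuclideanSpace.single i (1:ℝ) ∈ closedBall c δ2 := by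
      intro i s hs
      rw [mem_closedBall, dist_eq_norm, add_sub_cancel_left, norm_smul,
        EuclideanSpace.norm_single, norm_one, mul_one, Real.norm_eq_abs, abs_mul]
      rcases hs with h | h <;> rw [h] <;> simp [abs_of_pos hδ2]
    set f : Option (Fin d) → ℝ := fun o => Option.elim o (G c)
        (fun i => max (G (c + (δ2 * 1) • EuclideanSpace.single i 1))
                      (G (c + (δ2 * (-1)) • EuclideanSpace.single i 1))) with hfdef
    have hne : (Finset.univ : Finset (Option (Fin d))).Nonempty := ⟨none, Finset.mem_univ _⟩
    set B : ℝ := Finset.univ.sup' hne f with hBdef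
    have hfB : ∀ o, f o ≤ B := fun o => Finset.le_sup' f (Finset.mem_univ o)
    have hGcB : G c ≤ B := hfB none
    have hGiB : ∀ (i : Fin d) (s : ℝ), s = 1 ∨ s = -1 →
        G (c + (δ2 * s) • EuclideanSpace.single i 1) ≤ B := by
      intro i s hs
      rcases hs with h | h
      · subst h; exact (le_max_left _ _).trans (hfB (some i))
      · subst h; exact (le_max_right _ _).trans (hfB (some i))
    have hBu : ∀ m, ∀ y ∈ closedBall c η, vm m y ≤ B := by
      intro m
      exact local_upper' (hvm m) hδ2 hball
        (fun i s hs => ((hG _ (hball (hprobe i s hs))).1 m).trans (hGiB i s hs))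
        (((hG c hcΩ).1 m).trans hGcB)
    have hBv : ∀ y ∈ closedBall c η, v y ≤ B := by
      exact local_upper' hv hδ2 hball
        (fun i s hs => ((hG _ (hball (hprobe i s hs))).2).trans (hGiB i s hs))
        (((hG c hcΩ).2).trans hGcB)
    obtain ⟨a, ha⟩ : ∃ a, ∀ m, a ≤ vm m c := by
      obtain ⟨a, ha⟩ := (hlim c hcΩ).bddBelow_range
      exact ⟨a, fun m => ha (mem_range_self m)⟩
    have hav : a ≤ v c := ge_of_tendsto (hlim c hcΩ) (Eventually.of_forall ha)
    have haB : a ≤ B := (ha 0).trans (((hG c hcΩ).1 0).trans hGcB)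
    -- lower bound on the ball
    have hlow : ∀ (u : EuclideanSpace ℝ (Fin d) → ℝ), ConvexOn ℝ Ω u → a ≤ u c →
        (∀ y ∈ closedBall c η, u y ≤ B) → ∀ y ∈ closedBall c η, 2*a - B ≤ u y := by
      intro u hu hac hub y hy
      have hy' : c - (y - c) ∈ closedBall c η := by
        rw [mem_closedBall, dist_eq_norm] at hy ⊢
        rw [show c - (y - c) - c = -(y - c) by abel, norm_neg]
        exact hy
      have hmid : (1/2 : ℝ) • y + (1/2 : ℝ) • (c - (y - c)) = c := by
        match_scalars <;> norm_num
      have h2 := hu.2 (hballη hy) (hballη hy') (by norm_num : (0:ℝ) ≤ 1/2)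
        (by norm_num : (0:ℝ) ≤ 1/2) (by norm_num)
      rw [hmid] at h2
      have := hub _ hy'
      have hc2 := hac
      simp only [smul_eq_mul] at h2
      linarith
    set L : ℝ := (B - (2*a - B)) / (η/2) with hLdef
    have hL0 : 0 ≤ L := by
      apply div_nonneg _ (by positivity)
      linarith
    -- gradient bound on half ball
    have hgb : ∀ (u : EuclideanSpace ℝ (Fin d) → ℝ), ConvexOn ℝ Ω u →
        (∀ x ∈ Ω, DifferentiableAt ℝ u x) →
        (∀ y ∈ closedBall c η, u y ≤ B) → (∀ y ∈ closedBall c η, 2*a - B ≤ u y) →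
        ∀ x ∈ closedBall c (η/2), ‖gradient u x‖ ≤ L := by
      intro u hu hud hub hlb x hx
      rw [mem_closedBall] at hx
      have hsub : closedBall x (η/2) ⊆ closedBall c η :=
        closedBall_subset_closedBall' (by linarith)
      have hxη : x ∈ closedBall c η := hsub (mem_closedBall_self (by positivity))
      refine (norm_grad_le' hΩc hu (by positivity) (hsub.trans hballη)
        (hud x (hballη hxη)) (fun y hy => hub y (hsub hy))).trans ?_
      rw [hLdef]
      gcongr
      exact hlb x hxη
    -- Lipschitz estimate
    have hlip : ∀ (u : EuclideanSpace ℝ (Fin d) → ℝ), ConvexOn ℝ Ω u →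
        (∀ x ∈ Ω, DifferentiableAt ℝ u x) →
        (∀ y ∈ closedBall c η, u y ≤ B) → (∀ y ∈ closedBall c η, 2*a - B ≤ u y) →
        ∀ x ∈ closedBall c (η/2), |u x - u c| ≤ L * ‖x - c‖ := by
      intro u hu hud hub hlb x hx
      have hcball : c ∈ closedBall c (η/2) := mem_closedBall_self (by positivity)
      have hxΩ : x ∈ Ω := hballη ((closedBall_subset_closedBall (by linarith)) hx)
      have h1 : u x - u c ≤ L * ‖x - c‖ := by
        calc u x - u c ≤ ‖gradient u x‖ * ‖x - c‖ :=
              sub_le_grad_norm' hΩc hu hxΩ hcΩ (hud x hxΩ)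
          _ ≤ L * ‖x - c‖ := by
              apply mul_le_mul_of_nonneg_right (hgb u hu hud hub hlb x hx) (norm_nonneg _)
      have h2 : u c - u x ≤ L * ‖x - c‖ := by
        calc u c - u x ≤ ‖gradient u c‖ * ‖c - x‖ :=
              sub_le_grad_norm' hΩc hu hcΩ hxΩ (hud c hcΩ)
          _ ≤ L * ‖x - c‖ := by
              rw [norm_sub_rev]
              apply mul_le_mul_of_nonneg_right (hgb u hu hud hub hlb c hcball) (norm_nonneg _)
      exact abs_sub_le_iff.mpr ⟨h1, h2⟩
    refine ⟨min (η/2) (ε/(4*(L+1))), by positivity, ?_⟩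
    intro x hx
    have hx2 : x ∈ closedBall c (η/2) :=
      (closedBall_subset_closedBall (min_le_left _ _)) hx
    have hxd : ‖x - c‖ ≤ ε/(4*(L+1)) := by
      rw [mem_closedBall, dist_eq_norm] at hx
      exact hx.trans (min_le_right _ _)
    have hbound : ∀ (u : EuclideanSpace ℝ (Fin d) → ℝ), ConvexOn ℝ Ω u →
        (∀ x ∈ Ω, DifferentiableAt ℝ u x) →
        (∀ y ∈ closedBall c η, u y ≤ B) → (∀ y ∈ closedBall c η, 2*a - B ≤ u y) →
        |u x - u c| ≤ ε/4 := by
      intro u hu hud hub hlb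
      calc |u x - u c| ≤ L * ‖x - c‖ := hlip u hu hud hub hlb x hx2
        _ ≤ L * (ε/(4*(L+1))) := mul_le_mul_of_nonneg_left hxd hL0
        _ ≤ ε/4 := mul_div_le_quarter' hL0 hε
    constructor
    · intro m
      exact hbound (vm m) (hvm m) (hvmd m) (hBu m)
        (hlow (vm m) (hvm m) (ha m) (hBu m))
    · exact hbound v hv hvd hBv (hlow v hv hav hBv)
  choose! ρ hρpos hρprop using key
  obtain ⟨T, hTC, hTcov⟩ := hCc.elim_nhds_subcover (fun c => ball c (ρ c))
    (fun c hc => ball_mem_nhds c (hρpos c hc))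
  have hev : ∀ᶠ m in atTop, ∀ c ∈ T, |vm m c - v c| ≤ ε/4 := by
    rw [eventually_all_finset]
    intro c hc
    have hconv := hlim c (hCΩ (hTC c hc))
    have := Metric.tendsto_atTop.mp hconv (ε/4) (by positivity)
    obtain ⟨N, hN⟩ := this
    rw [eventually_atTop]
    exact ⟨N, fun m hm => by
      have := hN m hm
      rw [Real.dist_eq] at this
      exact this.le⟩
  rw [eventually_atTop] at hev
  obtain ⟨N, hN⟩ := hev
  refine ⟨N, fun m hm x hx => ?_⟩
  obtain ⟨c, hcT, hxc⟩ : ∃ c ∈ T, x ∈ ball c (ρ c) := by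
    have := hTcov hx
    simpa using this
  have hcC : c ∈ C := hTC c hcT
  have hxball : x ∈ closedBall c (ρ c) := ball_subset_closedBall hxc
  obtain ⟨h1, h2⟩ := hρprop c hcC x hxball
  have h3 := hN m hm c hcT
  have h2' : |v c - v x| ≤ ε/4 := by rw [abs_sub_comm]; exact h2
  have e : vm m x - v x = (vm m x - vm m c) + (vm m c - v c) + (v c - v x) := by ring
  rw [e]
  calc |(vm m x - vm m c) + (vm m c - v c) + (v c - v x)|
      ≤ |vm m x - vm m c| + |vm m c - v c| + |v c - v x| := abs_add_three _ _ _
    _ ≤ ε/4 + ε/4 + ε/4 := add_le_add (add_le_add (h1 m) h3) h2'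
    _ ≤ ε := by linarith

end Helpers

open Filter

theorem stmt13 (d : ℕ) (Ω : Set (EuclideanSpace ℝ (Fin d)))
    (hΩo : IsOpen Ω) (hΩc : Convex ℝ Ω)
    (v : EuclideanSpace ℝ (Fin d) → ℝ)
    (hv : ConvexOn ℝ Ω v) (hvd : ∀ x ∈ Ω, DifferentiableAt ℝ v x)
    (vm : ℕ → EuclideanSpace ℝ (Fin d) → ℝ)
    (hvm : ∀ m, ConvexOn ℝ Ω (vm m))
    (hvmd : ∀ m, ∀ x ∈ Ω, DifferentiableAt ℝ (vm m) x)
    (hlim : ∀ x ∈ Ω, Tendsto (fun m => vm m x) atTop (nhds (v x))) :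
    ∀ K ⊆ Ω, IsCompact K →
      TendstoUniformlyOn (fun m x => gradient (vm m) x) (fun x => gradient v x)
        atTop K := by
  intro K hKΩ hK
  rcases K.eq_empty_or_nonempty with rfl | hKne
  · exact tendstoUniformlyOn_empty
  obtain ⟨δ, hδpos, hδsub⟩ := hK.exists_cthickening_subset_open hΩo hKΩ
  set C := cthickening (δ/2) K with hCdef
  have hCeq : C = ⋃ y ∈ K, closedBall y (δ/2) :=
    hK.cthickening_eq_biUnion_closedBall (by positivity : (0:ℝ) ≤ δ/2)
  have hKδeq : cthickening δ K = ⋃ y ∈ K, closedBall y δ :=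
    hK.cthickening_eq_biUnion_closedBall hδpos.le
  have hCc : IsCompact C := hK.cthickening
  have hCKδ : C ⊆ cthickening δ K := cthickening_mono (by linarith : δ/2 ≤ δ) K
  have hCΩ : C ⊆ Ω := hCKδ.trans hδsub
  have hKδΩ : cthickening δ K ⊆ Ω := hδsub
  have hprobeC : ∀ x ∈ K, ∀ w : EuclideanSpace ℝ (Fin d), ‖w‖ ≤ δ/2 → x + w ∈ C := by
    intro x hx w hw
    rw [hCeq]
    refine mem_biUnion hx ?_
    rw [mem_closedBall, dist_eq_norm, add_sub_cancel_left]
    exact hw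
  have hCball2 : ∀ y ∈ C, closedBall y (δ/2) ⊆ cthickening δ K := by
    intro y hy p hp
    rw [hCeq] at hy
    obtain ⟨x, hx, hyx⟩ := mem_iUnion₂.mp hy
    rw [hKδeq]
    refine mem_biUnion hx ?_
    rw [mem_closedBall] at *
    calc dist p x ≤ dist p y + dist y x := dist_triangle _ _ _
      _ ≤ δ/2 + δ/2 := add_le_add hp hyx
      _ = δ := by ring
  have hCball : ∀ y ∈ C, closedBall y (δ/2) ⊆ Ω := fun y hy =>
    (hCball2 y hy).trans hKδΩ
  -- global Lipschitz bound for v on C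
  have hKδc : IsCompact (cthickening δ K) := hK.cthickening
  have hKδne : (cthickening δ K).Nonempty := hKne.mono (self_subset_cthickening K)
  have hvcont : ContinuousOn v (cthickening δ K) := fun x hx =>
    (hvd x (hKδΩ hx)).continuousAt.continuousWithinAt
  obtain ⟨pM, hpM, hM⟩ := hKδc.exists_isMaxOn hKδne hvcont
  obtain ⟨pm, hpm, hmv⟩ := hKδc.exists_isMinOn hKδne hvcont
  have hMle : ∀ y ∈ cthickening δ K, v y ≤ v pM := fun y hy => hM hy
  have hmle : ∀ y ∈ cthickening δ K, v pm ≤ v y := fun y hy => hmv hy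
  set L : ℝ := (v pM - v pm) / (δ/2) with hLdef
  have hL0 : 0 ≤ L := div_nonneg (by linarith [hMle pm hpm]) (by positivity)
  have hgradv : ∀ y ∈ C, ‖gradient v y‖ ≤ L := by
    intro y hy
    refine (norm_grad_le' hΩc hv (by positivity : (0:ℝ) < δ/2)
      (hCball y hy) (hvd y (hCΩ hy)) (fun p hp => hMle p (hCball2 y hy hp))).trans ?_
    rw [hLdef]
    gcongr
    exact hmle y (hCKδ hy)
  have hlipv : ∀ a b, a ∈ C → b ∈ C → |v a - v b| ≤ L * ‖a - b‖ := by
    intro a b ha hb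
    rw [abs_sub_le_iff]
    constructor
    · exact (sub_le_grad_norm' hΩc hv (hCΩ ha) (hCΩ hb) (hvd a (hCΩ ha))).trans
        (mul_le_mul_of_nonneg_right (hgradv a ha) (norm_nonneg _))
    · refine (sub_le_grad_norm' hΩc hv (hCΩ hb) (hCΩ ha) (hvd b (hCΩ hb))).trans ?_
      rw [norm_sub_rev]
      exact mul_le_mul_of_nonneg_right (hgradv b hb) (norm_nonneg _)
  clear hLdef hgradv
  clear_value L
  rw [Metric.tendstoUniformlyOn_iff]
  intro ε hε
  have key : ∀ x ∈ K, ∃ r, 0 < r ∧ r ≤ δ/2 ∧ ∃ ρ, 0 < ρ ∧ ∀ x' ∈ K, dist x' x < ρ →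
      ∀ z : EuclideanSpace ℝ (Fin d), ‖z‖ = 1 →
      v (x' + r • z) + v (x' - r • z) - 2 * v x' ≤ ε/2 * r := by
    intro x hx
    have hxΩ := hKΩ hx
    have hder := (hvd x hxΩ).hasFDerivAt
    rw [hasFDerivAt_iff_isLittleO_nhds_zero] at hder
    have hlittle := hder.def (show (0:ℝ) < ε/16 by positivity)
    rw [Metric.eventually_nhds_iff] at hlittle
    obtain ⟨r', hr', hball'⟩ := hlittle
    refine ⟨min (r'/2) (δ/2), by positivity, min_le_right _ _,
      ε * min (r'/2) (δ/2) / (16*(L+1)), by positivity, ?_⟩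
    set r := min (r'/2) (δ/2) with hrdef
    have hr0 : 0 < r := by positivity
    have herr : ∀ u : EuclideanSpace ℝ (Fin d), ‖u‖ ≤ r →
        v (x + u) - v x - (fderiv ℝ v x) u ≤ ε/16 * ‖u‖ := by
      intro u hu
      have hd : dist u 0 < r' := by
        rw [dist_zero_right]
        calc ‖u‖ ≤ r := hu
          _ ≤ r'/2 := min_le_left _ _
          _ < r' := by linarith
      have := hball' hd
      rw [Real.norm_eq_abs] at this
      calc v (x + u) - v x - (fderiv ℝ v x) u
          ≤ |v (x + u) - v x - (fderiv ℝ v x) u| := le_abs_self _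
        _ ≤ ε/16 * ‖u‖ := this
    intro x' hx' hdist z hz
    have hnrz : ‖r • z‖ = r := by
      rw [norm_smul, Real.norm_eq_abs, abs_of_pos hr0, hz, mul_one]
    have hnrz' : ‖-(r • z)‖ = r := by rw [norm_neg, hnrz]
    have mem1 : x' + r • z ∈ C := hprobeC x' hx' _ (hnrz.le.trans (min_le_right _ _))
    have mem2 : x' - r • z ∈ C := by
      rw [sub_eq_add_neg]
      exact hprobeC x' hx' _ (hnrz'.le.trans (min_le_right _ _))
    have mem3 : x' ∈ C := self_subset_cthickening _ hx'
    have mem4 : x + r • z ∈ C := hprobeC x hx _ (hnrz.le.trans (min_le_right _ _))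
    have mem5 : x - r • z ∈ C := by
      rw [sub_eq_add_neg]
      exact hprobeC x hx _ (hnrz'.le.trans (min_le_right _ _))
    have mem6 : x ∈ C := self_subset_cthickening _ hx
    -- Term1 at x
    have t1 : v (x + r • z) + v (x - r • z) - 2 * v x ≤ ε/8 * r := by
      have e1 := herr (r • z) hnrz.le
      have e2 := herr (-(r • z)) hnrz'.le
      rw [map_neg, hnrz'] at e2
      rw [hnrz] at e1
      rw [show x + -(r • z) = x - r • z by abel] at e2
      linarith
    -- transfer to x'
    have d1 := hlipv (x' + r • z) (x + r • z) mem1 mem4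
    have d2 := hlipv (x' - r • z) (x - r • z) mem2 mem5
    have d3 := hlipv x x' mem6 mem3
    rw [show (x' + r • z) - (x + r • z) = x' - x by abel] at d1
    rw [show (x' - r • z) - (x - r • z) = x' - x by abel] at d2
    rw [show ‖x - x'‖ = ‖x' - x‖ from norm_sub_rev _ _] at d3
    have habs1 := (abs_le.mp d1).2
    have habs2 := (abs_le.mp d2).2
    have habs3 := (abs_le.mp d3).2
    have habs1' := (abs_le.mp d1).1
    have habs2' := (abs_le.mp d2).1
    have habs3' := (abs_le.mp d3).1
    have hxx : ‖x' - x‖ < ε * r / (16*(L+1)) := by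
      rw [← dist_eq_norm]
      exact hdist
    have hLterm : 4 * (L * ‖x' - x‖) ≤ ε/2 * r - ε/8 * r := by
      have h1 : L * ‖x' - x‖ ≤ L * (ε * r / (16*(L+1))) :=
        mul_le_mul_of_nonneg_left hxx.le hL0
      have h2 : 4 * (L * (ε * r / (16*(L+1)))) = L * ((ε * r) / (4*(L+1))) := by
        rw [show (16:ℝ)*(L+1) = 4*(4*(L+1)) by ring, ← div_div]
        ring
      have h3 := mul_div_le_quarter' hL0 (show (0:ℝ) < ε * r by positivity)
      nlinarith
    linarith
  choose! r hr0 hrδ ρ hρ0 hbound using key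
  obtain ⟨T, hTK, hTcov⟩ := hK.elim_nhds_subcover (fun x => ball x (ρ x))
    (fun x hx => ball_mem_nhds _ (hρ0 x hx))
  have hTne : T.Nonempty := by
    obtain ⟨x₀, hx₀⟩ := hKne
    have := hTcov hx₀
    simp only [mem_iUnion, exists_prop] at this
    obtain ⟨c, hcT, _⟩ := this
    exact ⟨c, hcT⟩
  set rmin := T.inf' hTne r with hrmindef
  have hrmin0 : 0 < rmin := by
    rw [hrmindef, Finset.lt_inf'_iff]
    exact fun c hc => hr0 c (hTK c hc)
  obtain ⟨N, hN⟩ := unif_conv' hΩc hv hvd hvm hvmd hlim hCc hCΩ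
    (by positivity : (0:ℝ) < δ/2) hCball (ε/8 * rmin) (by positivity)
  rw [eventually_atTop]
  refine ⟨N, fun m hm x hx => ?_⟩
  obtain ⟨c, hcT, hxc⟩ : ∃ c ∈ T, x ∈ ball c (ρ c) := by
    have := hTcov hx
    simpa using this
  have hcK := hTK c hcT
  set rc := r c with hrcdef
  have hrc0 : 0 < rc := hr0 c hcK
  have hrcδ : rc ≤ δ/2 := hrδ c hcK
  have hrminrc : rmin ≤ rc := Finset.inf'_le r hcT
  set g := gradient (vm m) x - gradient v x with hgdef
  have hmain : ‖g‖ ≤ 3*ε/4 := by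
    rcases eq_or_ne g 0 with h0 | h0
    · rw [h0, norm_zero]; positivity
    set z := (‖g‖⁻¹ : ℝ) • g with hzdef
    have hz : ‖z‖ = 1 := norm_smul_inv_norm h0
    have hgz : inner ℝ g z = ‖g‖ := by
      rw [hzdef, real_inner_smul_right, real_inner_self_eq_norm_mul_norm]
      field_simp
    have hnrz : ‖rc • z‖ = rc := by
      rw [norm_smul, Real.norm_eq_abs, abs_of_pos hrc0, hz, mul_one]
    have hnrz' : ‖-(rc • z)‖ = rc := by rw [norm_neg, hnrz]
    have mem1 : x + rc • z ∈ C := hprobeC x hx _ (hnrz.le.trans hrcδ)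
    have mem2 : x - rc • z ∈ C := by
      rw [sub_eq_add_neg]
      exact hprobeC x hx _ (hnrz'.le.trans hrcδ)
    have mem3 : x ∈ C := self_subset_cthickening _ hx
    have hxΩ : x ∈ Ω := hKΩ hx
    -- gradient inequalities
    have h1 := inner_grad_le' hΩc (hvm m) hxΩ (hCΩ mem1) (hvmd m x hxΩ)
    have h2 := inner_grad_le' hΩc hv hxΩ (hCΩ mem2) (hvd x hxΩ)
    rw [add_sub_cancel_left, real_inner_smul_right] at h1
    rw [show (x - rc • z) - x = -(rc • z) by abel, inner_neg_right,
      real_inner_smul_right] at h2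
    -- uniform convergence bounds
    have u1 := hN m hm _ mem1
    have u3 := hN m hm x mem3
    -- second difference bound
    have t1 := hbound c hcK x hx (by rwa [mem_ball] at hxc) z hz
    have habs1 := (abs_le.mp u1).2
    have habs3 := (abs_le.mp u3).2
    have hεr : ε/8 * rmin ≤ ε/8 * rc := by
      apply mul_le_mul_of_nonneg_left hrminrc (by positivity)
    -- combine
    have hsum : rc * (inner ℝ g z : ℝ) ≤ 3*ε/4 * rc := by
      have hginner : (inner ℝ g z : ℝ)
          = (inner ℝ (gradient (vm m) x) z : ℝ) - (inner ℝ (gradient v x) z : ℝ) := by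
        rw [hgdef, inner_sub_left]
      calc rc * (inner ℝ g z : ℝ)
          = rc * (inner ℝ (gradient (vm m) x) z : ℝ)
            + (-(rc * (inner ℝ (gradient v x) z : ℝ))) := by
            rw [hginner]; ring
        _ ≤ (vm m (x + rc • z) - vm m x) + (v (x - rc • z) - v x) := by linarith
        _ = (vm m (x + rc • z) - v (x + rc • z)) + (v x - vm m x)
            + (v (x + rc • z) + v (x - rc • z) - 2 * v x) := by ring
        _ ≤ ε/8 * rc + ε/8 * rc + ε/2 * rc := by
            have hu3' : v x - vm m x ≤ ε/8 * rmin := by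
              have := (abs_le.mp u3).1
              linarith
            linarith
        _ = 3*ε/4 * rc := by ring
    rw [hgz] at hsum
    have := le_of_mul_le_mul_left (by linarith [hsum] : rc * ‖g‖ ≤ rc * (3*ε/4)) hrc0
    linarith
  rw [dist_eq_norm]
  calc ‖gradient v x - gradient (vm m) x‖ = ‖g‖ := by
        rw [hgdef, norm_sub_rev]
    _ ≤ 3*ε/4 := hmain
    _ < ε := by linarith
end

section
/- Let d, k ∈ ℕ, let U be a nonempty open subset of ℝ^d, let (p_n)_{n∈ℕ} and p be polynomials in d real variables of total degree at most k, and suppose that for every x ∈ U the values p_n(x) converge to p(x). Then for every monomial exponent α ∈ ℕ^d, the coefficient of x^α in p_n converges to the coefficient of x^α in p. -/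
open Filter MvPolynomial

lemma vanish_zero (d : ℕ) (U : Set (Fin d → ℝ)) (hUo : IsOpen U) (hUne : U.Nonempty)
    (r : MvPolynomial (Fin d) ℝ) (h : ∀ x ∈ U, eval x r = 0) : r = 0 := by
  obtain ⟨x₀, hx₀⟩ := hUne
  have hana : AnalyticOnNhd ℝ (fun x => eval x r) Set.univ :=
    AnalyticOnNhd.eval_mvPolynomial r
  have hev : (fun x => eval x r) =ᶠ[nhds x₀] 0 := by
    filter_upwards [hUo.mem_nhds hx₀] with x hx using h x hx
  have := hana.eqOn_zero_of_preconnected_of_eventuallyEq_zero isPreconnected_univ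
    (Set.mem_univ x₀) hev
  apply MvPolynomial.funext
  intro x
  simpa using this (Set.mem_univ x)

theorem stmt14 (d k : ℕ) (U : Set (Fin d → ℝ)) (hUo : IsOpen U) (hUne : U.Nonempty)
    (p : ℕ → MvPolynomial (Fin d) ℝ) (q : MvPolynomial (Fin d) ℝ)
    (hdegp : ∀ n, (p n).totalDegree ≤ k) (hdegq : q.totalDegree ≤ k)
    (hlim : ∀ x ∈ U,
      Tendsto (fun n => MvPolynomial.eval x (p n)) atTop (nhds (MvPolynomial.eval x q))) :
    ∀ α : Fin d →₀ ℕ,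
      Tendsto (fun n => (p n).coeff α) atTop (nhds (q.coeff α)) := by
  set V := restrictTotalDegree (Fin d) ℝ k with hV
  haveI : FiniteDimensional ℝ V := inferInstance
  -- evaluation functionals
  set E : (Fin d → ℝ) → (V →ₗ[ℝ] ℝ) :=
    fun x => ((aeval x).toLinearMap : MvPolynomial (Fin d) ℝ →ₗ[ℝ] ℝ).comp V.subtype with hE
  set W : Submodule ℝ (Module.Dual ℝ V) := Submodule.span ℝ (E '' U) with hW
  have hEapp : ∀ x (w : V), E x w = eval x (w : MvPolynomial (Fin d) ℝ) := by
    intro x w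
    show aeval x (w : MvPolynomial (Fin d) ℝ) = _
    rw [← coe_aeval_eq_eval]; rfl
  have hWcoann : W.dualCoannihilator = ⊥ := by
    rw [eq_bot_iff]
    intro v hv
    rw [Submodule.mem_dualCoannihilator] at hv
    have hv0 : (v : MvPolynomial (Fin d) ℝ) = 0 := by
      apply vanish_zero d U hUo hUne
      intro x hx
      have := hv (E x) (Submodule.subset_span ⟨x, hx, rfl⟩)
      rwa [hEapp] at this
    simpa [Submodule.mem_bot] using Subtype.ext hv0
  have hWtop : W = ⊤ := by
    have := (Subspace.dualCoannihilator_dualAnnihilator_eq (W := W)).symm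
    rw [hWcoann, Submodule.dualAnnihilator_bot] at this
    exact this
  -- the property is closed under span
  intro α
  have hpmem : ∀ n, p n ∈ V := fun n => (mem_restrictTotalDegree _ _ _).2 (hdegp n)
  have hqmem : q ∈ V := (mem_restrictTotalDegree _ _ _).2 hdegq
  set pn : ℕ → V := fun n => ⟨p n, hpmem n⟩
  set qv : V := ⟨q, hqmem⟩
  have key : ∀ f : Module.Dual ℝ V,
      Tendsto (fun n => f (pn n)) atTop (nhds (f qv)) := by
    intro f
    have hf : f ∈ W := hWtop ▸ Submodule.mem_top
    induction hf using Submodule.span_induction with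
    | mem g hg =>
      obtain ⟨x, hx, rfl⟩ := hg
      simpa [hEapp, pn, qv] using hlim x hx
    | zero => simp [tendsto_const_nhds]
    | add g₁ g₂ _ _ h₁ h₂ => simpa using h₁.add h₂
    | smul c g _ h => simpa using h.const_mul c
  have := key ((lcoeff ℝ α).comp V.subtype)
  simpa [pn, qv] using this
end

section
/- Let d, k ∈ ℕ, let U be a nonempty open subset of ℝ^d, let (p_n)_{n∈ℕ} and p be polynomials in d real variables of total degree at most k, and suppose that for every x ∈ U the values p_n(x) converge to p(x). Then p_n converges to p uniformly on every compact subset K of ℝ^d, i.e. sup_{x∈K} |p_n(x) − p(x)| → 0 as n → ∞. -/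
open Filter MvPolynomial

lemma eval_zero_on_open {d : ℕ} {U : Set (Fin d → ℝ)} (hUo : IsOpen U) (hUne : U.Nonempty)
    {q : MvPolynomial (Fin d) ℝ} (h : ∀ x ∈ U, eval x q = 0) : q = 0 := by
  obtain ⟨z, hz⟩ := hUne
  have hana : AnalyticOnNhd ℝ (fun x => eval x q) Set.univ :=
    AnalyticOnNhd.eval_mvPolynomial q
  have hev : (fun x => eval x q) =ᶠ[nhds z] 0 := by
    filter_upwards [hUo.mem_nhds hz] with x hx using h x hx
  have := hana.eqOn_zero_of_preconnected_of_eventuallyEq_zero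
    isPreconnected_univ (Set.mem_univ z) hev
  apply MvPolynomial.funext
  intro x
  simpa using this (Set.mem_univ x)

lemma tendsto_of_comp_inj {W E : Type*} [NormedAddCommGroup W] [NormedSpace ℝ W]
    [FiniteDimensional ℝ W] [AddCommGroup E] [Module ℝ E] [TopologicalSpace E]
    [IsTopologicalAddGroup E] [ContinuousSMul ℝ E] [T2Space E]
    (T : W →ₗ[ℝ] E) (hT : Function.Injective T) {w : ℕ → W} {w₀ : W}
    (h : Tendsto (fun n => T (w n)) atTop (nhds (T w₀))) : Tendsto w atTop (nhds w₀) := by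
  let e : W ≃ₗ[ℝ] LinearMap.range T := LinearEquiv.ofInjective T hT
  let e' := e.toContinuousLinearEquiv
  have hsub : Tendsto (fun n => (⟨T (w n), LinearMap.mem_range_self T _⟩ : LinearMap.range T))
      atTop (nhds ⟨T w₀, LinearMap.mem_range_self T _⟩) := by
    rw [tendsto_subtype_rng]
    exact h
  have : ∀ v : W, e'.symm ⟨T v, LinearMap.mem_range_self T v⟩ = v := by
    intro v
    have : e' v = ⟨T v, LinearMap.mem_range_self T v⟩ := rfl
    rw [← this, ContinuousLinearEquiv.symm_apply_apply]
  have key := (e'.symm.continuous.tendsto _).comp hsub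
  simpa only [Function.comp_def, this] using key

section
variable {d : ℕ} (S : Finset (Fin d →₀ ℕ))

noncomputable def Tmap (U : Set (Fin d → ℝ)) : ({α // α ∈ S} → ℝ) →ₗ[ℝ] (U → ℝ) where
  toFun w x := ∑ α : {α // α ∈ S}, w α * ∏ i, (x : Fin d → ℝ) i ^ (α : Fin d →₀ ℕ) i
  map_add' w w' := by
    funext x
    simp [add_mul, Finset.sum_add_distrib]
  map_smul' c w := by
    funext x
    simp [Finset.mul_sum, mul_assoc]

lemma Tmap_inj {U : Set (Fin d → ℝ)} (hUo : IsOpen U) (hUne : U.Nonempty) :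
    Function.Injective (Tmap S U) := by
  rw [injective_iff_map_eq_zero]
  intro w hw
  set r : MvPolynomial (Fin d) ℝ := ∑ α : {α // α ∈ S}, monomial (α : Fin d →₀ ℕ) (w α) with hr
  have hcoeff : ∀ α : {α // α ∈ S}, coeff (α : Fin d →₀ ℕ) r = w α := by
    intro α
    rw [hr, coeff_sum]
    rw [Finset.sum_eq_single α]
    · simp [coeff_monomial]
    · intro β _ hβ
      rw [coeff_monomial, if_neg]
      exact fun h => hβ (Subtype.ext h)
    · simp
  have heval : ∀ x : Fin d → ℝ, eval x r
      = ∑ α : {α // α ∈ S}, w α * ∏ i, x i ^ (α : Fin d →₀ ℕ) i := by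
    intro x
    rw [hr, map_sum]
    refine Finset.sum_congr rfl fun α _ => ?_
    rw [eval_monomial]
    congr 1
    rw [Finsupp.prod_pow]
  have hr0 : r = 0 := by
    apply eval_zero_on_open hUo hUne
    intro x hx
    rw [heval]
    have := congrFun hw ⟨x, hx⟩
    simpa [Tmap] using this
  funext α
  have := hcoeff α
  rw [hr0] at this
  simpa using this.symm

end

theorem stmt15 (d k : ℕ) (U : Set (Fin d → ℝ)) (hUo : IsOpen U) (hUne : U.Nonempty)
    (p : ℕ → MvPolynomial (Fin d) ℝ) (q : MvPolynomial (Fin d) ℝ)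
    (hdegp : ∀ n, (p n).totalDegree ≤ k) (hdegq : q.totalDegree ≤ k)
    (hlim : ∀ x ∈ U,
      Tendsto (fun n => MvPolynomial.eval x (p n)) atTop (nhds (MvPolynomial.eval x q))) :
    ∀ K : Set (Fin d → ℝ), IsCompact K →
      TendstoUniformlyOn (fun n x => MvPolynomial.eval x (p n))
        (fun x => MvPolynomial.eval x q) atTop K := by
  set D : Fin d →₀ ℕ := Finsupp.equivFunOnFinite.symm (fun _ : Fin d => k) with hD
  set S : Finset (Fin d →₀ ℕ) := Finset.Iic D with hS
  -- evaluation identity for polynomials of total degree ≤ k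
  have keyeval : ∀ r : MvPolynomial (Fin d) ℝ, r.totalDegree ≤ k → ∀ x : Fin d → ℝ,
      eval x r = ∑ α : {α // α ∈ S}, coeff (α : Fin d →₀ ℕ) r * ∏ i, x i ^ (α : Fin d →₀ ℕ) i := by
    intro r hr x
    rw [Finset.sum_coe_sort S (fun α => coeff α r * ∏ i, x i ^ α i), eval_eq']
    apply Finset.sum_subset
    · intro α hα
      rw [hS, Finset.mem_Iic, Finsupp.le_iff]
      intro i _
      calc α i ≤ α.sum fun _ e => e := by
              rw [Finsupp.sum]
              by_cases hi : i ∈ α.support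
              · exact Finset.single_le_sum (fun _ _ => Nat.zero_le _) hi
              · simp [Finsupp.notMem_support_iff.mp hi]
        _ ≤ r.totalDegree := le_totalDegree hα
        _ ≤ k := hr
        _ = D i := by simp [hD, Finsupp.equivFunOnFinite]; rfl
    · intro α _ hα
      simp [notMem_support_iff.mp hα]
  set c : MvPolynomial (Fin d) ℝ → ({α // α ∈ S} → ℝ) :=
    fun r α => coeff (α : Fin d →₀ ℕ) r with hc
  have hTc : ∀ r : MvPolynomial (Fin d) ℝ, r.totalDegree ≤ k → ∀ x : U,
      Tmap S U (c r) x = eval (x : Fin d → ℝ) r := by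
    intro r hr x
    rw [keyeval r hr]
    simp [Tmap, hc]
  have hconv : Tendsto (fun n => c (p n)) atTop (nhds (c q)) := by
    apply tendsto_of_comp_inj (Tmap S U) (Tmap_inj S hUo hUne)
    rw [tendsto_pi_nhds]
    intro x
    rw [hTc q hdegq x]
    have : ∀ n, Tmap S U (c (p n)) x = eval (x : Fin d → ℝ) (p n) :=
      fun n => hTc (p n) (hdegp n) x
    simp only [this]
    exact hlim x x.2
  have hcoef : ∀ α : {α // α ∈ S},
      Tendsto (fun n => coeff (α : Fin d →₀ ℕ) (p n)) atTop (nhds (coeff (α : Fin d →₀ ℕ) q)) :=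
    fun α => tendsto_pi_nhds.mp hconv α
  -- uniform convergence on compacts
  intro K hK
  obtain ⟨C, hC⟩ := hK.isBounded.exists_norm_le
  set C' : ℝ := max C 1 with hC'
  have hC'1 : (1 : ℝ) ≤ C' := le_max_right _ _
  have hbound : ∀ x ∈ K, ∀ α : {α // α ∈ S},
      |∏ i, x i ^ (α : Fin d →₀ ℕ) i| ≤ C' ^ (d * k) := by
    intro x hx α
    rw [Finset.abs_prod]
    calc ∏ i, |x i ^ (α : Fin d →₀ ℕ) i| ≤ ∏ i : Fin d, C' ^ k := by
          apply Finset.prod_le_prod (fun _ _ => abs_nonneg _)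
          intro i _
          rw [abs_pow]
          calc |x i| ^ (α : Fin d →₀ ℕ) i ≤ C' ^ (α : Fin d →₀ ℕ) i := by
                apply pow_le_pow_left₀ (abs_nonneg _)
                exact le_trans (le_trans (norm_le_pi_norm x i) (hC x hx)) (le_max_left _ _)
            _ ≤ C' ^ k := by
                apply pow_le_pow_right₀ hC'1
                have hαS := α.2
                simp only [hS, Finset.mem_Iic] at hαS
                have := Finsupp.le_def.mp hαS i
                exact this
      _ = C' ^ (d * k) := by rw [Finset.prod_const, ← pow_mul, Finset.card_univ, Fintype.card_fin, mul_comm]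
  set g : ℕ → ℝ := fun n => ∑ α : {α // α ∈ S},
    |coeff (α : Fin d →₀ ℕ) (p n) - coeff (α : Fin d →₀ ℕ) q| with hg
  have hg0 : Tendsto g atTop (nhds 0) := by
    have : Tendsto (fun n => ∑ α : {α // α ∈ S},
        |coeff (α : Fin d →₀ ℕ) (p n) - coeff (α : Fin d →₀ ℕ) q|) atTop
        (nhds (∑ α : {α // α ∈ S}, (0:ℝ))) := by
      apply tendsto_finset_sum
      intro α _
      have h1 := (hcoef α).sub (tendsto_const_nhds (x := coeff (α : Fin d →₀ ℕ) q))
      rw [sub_self] at h1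
      simpa using h1.abs
    simpa [hg] using this
  have hMg : Tendsto (fun n => C' ^ (d * k) * g n) atTop (nhds 0) := by
    simpa using hg0.const_mul (C' ^ (d * k))
  rw [Metric.tendstoUniformlyOn_iff]
  intro ε hε
  filter_upwards [hMg.eventually (gt_mem_nhds hε)] with n hn x hx
  rw [Real.dist_eq]
  calc |eval x q - eval x (p n)| ≤ C' ^ (d * k) * g n := by
        rw [keyeval q hdegq x, keyeval (p n) (hdegp n) x, ← Finset.sum_sub_distrib]
        calc |∑ α : {α // α ∈ S}, (coeff (α : Fin d →₀ ℕ) q * ∏ i, x i ^ (α : Fin d →₀ ℕ) i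
              - coeff (α : Fin d →₀ ℕ) (p n) * ∏ i, x i ^ (α : Fin d →₀ ℕ) i)|
            ≤ ∑ α : {α // α ∈ S}, |(coeff (α : Fin d →₀ ℕ) q
              - coeff (α : Fin d →₀ ℕ) (p n)) * ∏ i, x i ^ (α : Fin d →₀ ℕ) i| := by
              simp only [← sub_mul]
              exact Finset.abs_sum_le_sum_abs _ _
          _ ≤ ∑ α : {α // α ∈ S}, |coeff (α : Fin d →₀ ℕ) q - coeff (α : Fin d →₀ ℕ) (p n)|
                * C' ^ (d * k) := by
              apply Finset.sum_le_sum
              intro α _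
              rw [abs_mul]
              exact mul_le_mul_of_nonneg_left (hbound x hx α) (abs_nonneg _)
          _ = C' ^ (d * k) * g n := by
              rw [hg, Finset.mul_sum]
              refine Finset.sum_congr rfl fun α _ => ?_
              rw [abs_sub_comm, mul_comm]
    _ < ε := hn
end

section
/- Let d, k ∈ ℕ, let U be a nonempty open subset of ℝ^d, let (p_n)_{n∈ℕ} and p be polynomials in d real variables of total degree at most k, and suppose that for every x ∈ U the values p_n(x) converge to p(x). Then the gradient maps x ↦ ∇p_n(x) converge to x ↦ ∇p(x) uniformly on every compact subset K of ℝ^d, i.e. sup_{x∈K} ‖∇p_n(x) − ∇p(x)‖ → 0 as n → ∞. -/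
open Filter

open MvPolynomial

noncomputable section Stmt16Aux
open scoped Gradient

/-- evaluation of a polynomial on EuclideanSpace -/
def evalE (d : ℕ) (r : MvPolynomial (Fin d) ℝ) (x : EuclideanSpace ℝ (Fin d)) : ℝ :=
  MvPolynomial.eval (WithLp.equiv 2 (Fin d → ℝ) x) r

lemma analyticOnNhd_evalE (d : ℕ) (r : MvPolynomial (Fin d) ℝ) :
    AnalyticOnNhd ℝ (evalE d r) Set.univ := by
  have h := AnalyticOnNhd.eval_continuousLinearMap
    (𝕜 := ℝ) (E := EuclideanSpace ℝ (Fin d))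
    (EuclideanSpace.equiv (Fin d) ℝ).toContinuousLinearMap r
  exact h

lemma differentiableAt_evalE (d : ℕ) (r : MvPolynomial (Fin d) ℝ) (x : EuclideanSpace ℝ (Fin d)) :
    DifferentiableAt ℝ (evalE d r) x :=
  (analyticOnNhd_evalE d r x (Set.mem_univ x)).differentiableAt

lemma evalE_add (d : ℕ) (a b : MvPolynomial (Fin d) ℝ) :
    evalE d (a + b) = fun x => evalE d a x + evalE d b x := by
  funext x; simp [evalE]

lemma evalE_smul (d : ℕ) (c : ℝ) (a : MvPolynomial (Fin d) ℝ) :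
    evalE d (c • a) = fun x => c * evalE d a x := by
  funext x; simp [evalE, MvPolynomial.smul_eval]

/-- gradient as a linear map in the polynomial -/
def gradPoly (d : ℕ) (x : EuclideanSpace ℝ (Fin d)) :
    MvPolynomial (Fin d) ℝ →ₗ[ℝ] EuclideanSpace ℝ (Fin d) where
  toFun r := gradient (evalE d r) x
  map_add' a b := by
    show gradient (evalE d (a + b)) x = _
    unfold gradient
    rw [← map_add]
    congr 1
    rw [evalE_add]
    exact fderiv_add (differentiableAt_evalE d a x) (differentiableAt_evalE d b x)
  map_smul' c a := by
    show gradient (evalE d (c • a)) x = _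
    unfold gradient
    simp only [RingHom.id_apply]
    rw [← map_smul]
    congr 1
    rw [evalE_smul]
    exact fderiv_const_mul (differentiableAt_evalE d a x) c

lemma continuous_gradPoly (d : ℕ) (r : MvPolynomial (Fin d) ℝ) :
    Continuous (fun x => gradPoly d x r) := by
  have hcd : ContDiff ℝ 1 (evalE d r) := by
    rw [contDiff_iff_contDiffAt]
    intro x
    exact (analyticOnNhd_evalE d r x (Set.mem_univ x)).contDiffAt
  have hfd : Continuous (fun x => fderiv ℝ (evalE d r) x) :=
    hcd.continuous_fderiv one_ne_zero
  exact (InnerProductSpace.toDual ℝ (EuclideanSpace ℝ (Fin d))).symm.continuous.comp hfd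

/-- a polynomial vanishing on a nonempty open set is zero -/
lemma eq_zero_of_evalE_zero (d : ℕ) (w : MvPolynomial (Fin d) ℝ)
    (U : Set (EuclideanSpace ℝ (Fin d))) (hUo : IsOpen U) (hUne : U.Nonempty)
    (h : ∀ x ∈ U, evalE d w x = 0) : w = 0 := by
  obtain ⟨z, hz⟩ := hUne
  have han : AnalyticOnNhd ℝ (evalE d w) Set.univ := analyticOnNhd_evalE d w
  have hev : evalE d w =ᶠ[nhds z] 0 := by
    filter_upwards [hUo.mem_nhds hz] with y hy using h y hy
  have hzero : Set.EqOn (evalE d w) 0 Set.univ :=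
    han.eqOn_zero_of_preconnected_of_eventuallyEq_zero isPreconnected_univ
      (Set.mem_univ z) hev
  apply MvPolynomial.funext
  intro x
  have := hzero (Set.mem_univ ((WithLp.equiv 2 (Fin d → ℝ)).symm x))
  simpa [evalE] using this

end Stmt16Aux

noncomputable section Stmt16Aux2

/-- evaluation as a linear map -/
def evalLM (d : ℕ) (x : EuclideanSpace ℝ (Fin d)) : MvPolynomial (Fin d) ℝ →ₗ[ℝ] ℝ where
  toFun r := evalE d r x
  map_add' a b := by simp [evalE]
  map_smul' c a := by simp [evalE, MvPolynomial.smul_eval]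

end Stmt16Aux2

theorem stmt16 (d k : ℕ) (U : Set (EuclideanSpace ℝ (Fin d)))
    (hUo : IsOpen U) (hUne : U.Nonempty)
    (p : ℕ → MvPolynomial (Fin d) ℝ) (q : MvPolynomial (Fin d) ℝ)
    (hdegp : ∀ n, (p n).totalDegree ≤ k) (hdegq : q.totalDegree ≤ k)
    (hlim : ∀ x ∈ U,
      Tendsto (fun n => MvPolynomial.eval (WithLp.equiv 2 (Fin d → ℝ) x) (p n)) atTop
        (nhds (MvPolynomial.eval (WithLp.equiv 2 (Fin d → ℝ) x) q))) :
    ∀ K : Set (EuclideanSpace ℝ (Fin d)), IsCompact K →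
      TendstoUniformlyOn
        (fun n x =>
          gradient (fun y : EuclideanSpace ℝ (Fin d) =>
            MvPolynomial.eval (WithLp.equiv 2 (Fin d → ℝ) y) (p n)) x)
        (fun x =>
          gradient (fun y : EuclideanSpace ℝ (Fin d) =>
            MvPolynomial.eval (WithLp.equiv 2 (Fin d → ℝ) y) q) x)
        atTop K := by
  classical
  set V := MvPolynomial.restrictTotalDegree (Fin d) ℝ k with hV
  haveI : FiniteDimensional ℝ V := inferInstance
  -- the difference sequence
  have hvmem : ∀ n, p n - q ∈ V := by
    intro n
    rw [MvPolynomial.mem_restrictTotalDegree]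
    exact le_trans (MvPolynomial.totalDegree_sub _ _) (max_le (hdegp n) hdegq)
  set v : ℕ → V := fun n => ⟨p n - q, hvmem n⟩ with hvdef
  -- evaluations as dual vectors
  set ev : EuclideanSpace ℝ (Fin d) → Module.Dual ℝ V :=
    fun x => (evalLM d x).comp V.subtype with hev
  set W : Submodule ℝ (Module.Dual ℝ V) := Submodule.span ℝ (ev '' U) with hW
  have hWco : W.dualCoannihilator = ⊥ := by
    rw [eq_bot_iff]
    intro w hw
    rw [Submodule.mem_dualCoannihilator] at hw
    have hw0 : ∀ x ∈ U, evalE d (w : MvPolynomial (Fin d) ℝ) x = 0 := by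
      intro x hx
      exact hw (ev x) (Submodule.subset_span ⟨x, hx, rfl⟩)
    have : (w : MvPolynomial (Fin d) ℝ) = 0 :=
      eq_zero_of_evalE_zero d _ U hUo hUne hw0
    simpa [Submodule.mem_bot] using Subtype.ext this
  have hWtop : W = ⊤ := by
    have h1 := Subspace.dualCoannihilator_dualAnnihilator_eq (W := W)
    rw [hWco, Submodule.dualAnnihilator_bot] at h1
    exact h1.symm
  -- all dual functionals of v n tend to 0
  have hdual : ∀ φ : Module.Dual ℝ V, Tendsto (fun n => φ (v n)) atTop (nhds 0) := by
    intro φ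
    have hφW : φ ∈ W := hWtop ▸ Submodule.mem_top
    rw [hW] at hφW
    induction hφW using Submodule.span_induction with
    | mem φ hφ =>
      obtain ⟨x, hxU, rfl⟩ := hφ
      have h1 : ∀ n, ev x (v n) = MvPolynomial.eval (WithLp.equiv 2 (Fin d → ℝ) x) (p n)
          - MvPolynomial.eval (WithLp.equiv 2 (Fin d → ℝ) x) q := by
        intro n
        simp [hev, evalLM, evalE, hvdef]
      have h2 := (hlim x hxU).sub
        (tendsto_const_nhds (x := MvPolynomial.eval (WithLp.equiv 2 (Fin d → ℝ) x) q)
          (f := atTop))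
      rw [sub_self] at h2
      simpa only [h1] using h2
    | zero => simpa using tendsto_const_nhds
    | add φ ψ hφ hψ ihφ ihψ =>
      have := ihφ.add ihψ
      simpa using this
    | smul c φ hφ ih =>
      have := ih.const_mul c
      simpa using this
  -- coordinates with respect to a basis tend to zero
  haveI : Module.Free ℝ V := Module.Free.of_divisionRing ℝ V
  set b := Module.finBasis ℝ V with hb
  have hc : ∀ i, Tendsto (fun n => b.repr (v n) i) atTop (nhds 0) := by
    intro i
    simpa using hdual (b.coord i)
  -- main goal
  intro K hK
  rcases K.eq_empty_or_nonempty with rfl | hKne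
  · exact tendstoUniformlyOn_empty
  rw [Metric.tendstoUniformlyOn_iff]
  intro ε hε
  have hMex : ∀ i, ∃ M : ℝ, ∀ x ∈ K,
      ‖gradPoly d x ((b i : V) : MvPolynomial (Fin d) ℝ)‖ ≤ M :=
    fun i => hK.exists_bound_of_continuousOn (continuous_gradPoly d _).continuousOn
  choose M hM using hMex
  have hM0 : ∀ i, 0 ≤ M i := by
    intro i
    obtain ⟨x0, hx0⟩ := hKne
    exact le_trans (norm_nonneg _) (hM i x0 hx0)
  set S : ℝ := ∑ i, (M i + 1) with hS
  have hS0 : 0 ≤ S := Finset.sum_nonneg fun i _ => by linarith [hM0 i]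
  set δ : ℝ := ε / (S + 1) with hδ
  have hδ0 : 0 < δ := div_pos hε (by linarith)
  have hevn : ∀ᶠ n in atTop, ∀ i, |b.repr (v n) i| < δ := by
    rw [eventually_all]
    intro i
    have h3 := NormedAddCommGroup.tendsto_nhds_zero.mp (hc i) δ hδ0
    simpa [Real.norm_eq_abs] using h3
  filter_upwards [hevn] with n hn x hx
  have hgq : gradient (fun y : EuclideanSpace ℝ (Fin d) =>
      MvPolynomial.eval (WithLp.equiv 2 (Fin d → ℝ) y) q) x = gradPoly d x q := rfl
  have hgp : gradient (fun y : EuclideanSpace ℝ (Fin d) =>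
      MvPolynomial.eval (WithLp.equiv 2 (Fin d → ℝ) y) (p n)) x = gradPoly d x (p n) := rfl
  rw [dist_eq_norm, hgq, hgp, ← map_sub]
  have hqp : q - p n = -((v n : V) : MvPolynomial (Fin d) ℝ) := by
    simp [hvdef]
  rw [hqp, map_neg, norm_neg]
  have hrepr : (v n : V) = ∑ i, b.repr (v n) i • b i := (b.sum_repr (v n)).symm
  have hcoe : ((v n : V) : MvPolynomial (Fin d) ℝ)
      = ∑ i, b.repr (v n) i • ((b i : V) : MvPolynomial (Fin d) ℝ) := by
    conv_lhs => rw [hrepr]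
    push_cast
    rfl
  rw [hcoe, map_sum]
  calc ‖∑ i, gradPoly d x (b.repr (v n) i • ((b i : V) : MvPolynomial (Fin d) ℝ))‖
      ≤ ∑ i, ‖gradPoly d x (b.repr (v n) i • ((b i : V) : MvPolynomial (Fin d) ℝ))‖ :=
        norm_sum_le _ _
    _ ≤ ∑ i, δ * (M i + 1) := by
        apply Finset.sum_le_sum
        intro i _
        rw [map_smul, norm_smul, Real.norm_eq_abs]
        apply mul_le_mul (le_of_lt (hn i)) ((hM i x hx).trans (by linarith))
          (norm_nonneg _) (le_of_lt hδ0)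
    _ = δ * S := by rw [hS, Finset.mul_sum]
    _ < δ * (S + 1) := by
        exact mul_lt_mul_of_pos_left (lt_add_one S) hδ0
    _ = ε := by
        rw [hδ]
        field_simp
end
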